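/- If $w_i < w_j$ and $p_i \ne p_j$, then the domain region $Dom(p_i,p_j)$ (with weighted distance $\|x-p\|/w$) is a compact convex set containing $p_i$ but not $p_j$. -/

import Mathlib

open RealInnerProductSpace

theorem dom_compact_convex
    (pi pj : EuclideanSpace ℝ (Fin 2)) (hp : pi ≠ pj)
    (wi wj : ℝ) (hwi : 0 < wi) (hij : wi < wj) :
    IsCompact {x : EuclideanSpace ℝ (Fin 2) | ‖x - pi‖ / wi ≤ ‖x - pj‖ / wj} ∧
    Convex ℝ {x : EuclideanSpace ℝ (Fin 2) | ‖x - pi‖ / wi ≤ ‖x - pj‖ / wj} ∧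
    pi ∈ {x : EuclideanSpace ℝ (Fin 2) | ‖x - pi‖ / wi ≤ ‖x - pj‖ / wj} ∧
    pj ∉ {x : EuclideanSpace ℝ (Fin 2) | ‖x - pi‖ / wi ≤ ‖x - pj‖ / wj} := by
  have hwj : 0 < wj := hwi.trans hij
  set c : ℝ := wj ^ 2 - wi ^ 2 with hc
  have hcpos : 0 < c := by nlinarith
  set q : EuclideanSpace ℝ (Fin 2) := c⁻¹ • (wj ^ 2 • pi - wi ^ 2 • pj) with hq
  set R : ℝ := ‖q‖ ^ 2 - (wj ^ 2 * ‖pi‖ ^ 2 - wi ^ 2 * ‖pj‖ ^ 2) / c with hR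
  have key : ∀ x : EuclideanSpace ℝ (Fin 2),
      ‖x - pi‖ / wi ≤ ‖x - pj‖ / wj ↔ ‖x - q‖ ^ 2 ≤ R := by
    intro x
    rw [div_le_div_iff₀ hwi hwj]
    have h1 : ‖x - pi‖ * wj ≤ ‖x - pj‖ * wi ↔
        (‖x - pi‖ * wj) ^ 2 ≤ (‖x - pj‖ * wi) ^ 2 :=
      (pow_le_pow_iff_left₀ (by positivity) (by positivity) two_ne_zero).symm
    rw [h1]
    have e1 : ‖x - pi‖ ^ 2 = ‖x‖ ^ 2 - 2 * ⟪x, pi⟫ + ‖pi‖ ^ 2 := norm_sub_sq_real x pi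
    have e2 : ‖x - pj‖ ^ 2 = ‖x‖ ^ 2 - 2 * ⟪x, pj⟫ + ‖pj‖ ^ 2 := norm_sub_sq_real x pj
    have e3 : ‖x - q‖ ^ 2 = ‖x‖ ^ 2 - 2 * ⟪x, q⟫ + ‖q‖ ^ 2 := norm_sub_sq_real x q
    have e4 : ⟪x, q⟫ = c⁻¹ * (wj ^ 2 * ⟪x, pi⟫ - wi ^ 2 * ⟪x, pj⟫) := by
      rw [hq, real_inner_smul_right, inner_sub_right, real_inner_smul_right,
        real_inner_smul_right]
    have hinv : c * c⁻¹ = 1 := mul_inv_cancel₀ hcpos.ne'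
    rw [show (‖x - q‖ ^ 2 ≤ R) ↔ c * ‖x - q‖ ^ 2 ≤ c * R from (mul_le_mul_iff_right₀ hcpos).symm,
      e3, e4, hR, mul_pow, mul_pow, e1, e2, div_eq_mul_inv]
    have heq : c * (‖x‖ ^ 2 - 2 * (c⁻¹ * (wj ^ 2 * ⟪x, pi⟫ - wi ^ 2 * ⟪x, pj⟫)) + ‖q‖ ^ 2)
        - c * (‖q‖ ^ 2 - (wj ^ 2 * ‖pi‖ ^ 2 - wi ^ 2 * ‖pj‖ ^ 2) * c⁻¹)
        = (‖x‖ ^ 2 - 2 * ⟪x, pi⟫ + ‖pi‖ ^ 2) * wj ^ 2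
          - (‖x‖ ^ 2 - 2 * ⟪x, pj⟫ + ‖pj‖ ^ 2) * wi ^ 2 := by
      rw [hc]
      have hc0 : wj ^ 2 - wi ^ 2 ≠ 0 := by rw [← hc]; exact hcpos.ne'
      field_simp
      ring
    constructor <;> intro h <;> linarith [heq]
  have hS : {x : EuclideanSpace ℝ (Fin 2) | ‖x - pi‖ / wi ≤ ‖x - pj‖ / wj} =
      Metric.closedBall q (Real.sqrt R) := by
    have hRpos : 0 ≤ R := by
      have := (key pi).mp (by simp [div_nonneg (norm_nonneg _) hwj.le])
      nlinarith [sq_nonneg ‖pi - q‖]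
    ext x
    simp only [Set.mem_setOf_eq, Metric.mem_closedBall, dist_eq_norm, key x]
    rw [show (‖x - q‖ ≤ Real.sqrt R) ↔ ‖x - q‖ ^ 2 ≤ R from
      Real.le_sqrt (norm_nonneg _) hRpos]
  refine ⟨?_, ?_, ?_, ?_⟩
  · rw [hS]; exact isCompact_closedBall q _
  · rw [hS]; exact convex_closedBall q _
  · simp [div_nonneg (norm_nonneg _) hwj.le]
  · simp only [Set.mem_setOf_eq, sub_self, norm_zero, zero_div, not_le]
    have : 0 < ‖pj - pi‖ := by
      rw [norm_pos_iff, sub_ne_zero]; exact hp.symm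
    positivity
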